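/- Let F be a finite type, ∂F ⊆ F, and Q a complex symmetric matrix indexed by F. Define T(L_Q) = {(f|_{∂F}, (Q·f)|_{∂F}) : f : F → ℂ, (Q·f)|_{F∖∂F} = 0} ⊆ (∂F → ℂ) × (∂F → ℂ). Then: (a) T(L_Q) ∩ ((∂F → ℂ) × {0}) = {(f|_{∂F}, 0) : Q·f = 0}, and its dimension equals dim ker Q − dim{f : Q·f = 0 and f|_{∂F} = 0}; (b) T(L_Q) ∩ ({0} × (∂F → ℂ)) = {(0, (Q·f)|_{∂F}) : f|_{∂F} = 0 and (Q·f)|_{F∖∂F} = 0}, and its dimension equals dim{f : f|_{∂F} = 0 and (Q·f)|_{F∖∂F} = 0} − dim{f : Q·f = 0 and f|_{∂F} = 0}. (For Q = Q_ρ + λ I_b this identifies the multiplicity of λ as a Neumann-only, respectively Dirichlet-only, eigenvalue with the dimension of the intersection of the symplectic reduction of L_Q with ℂ^{∂F} ⊕ 0, respectively 0 ⊕ (ℂ^{∂F})*.) -/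

import Mathlib

open Matrix

noncomputable section

/-- Functions vanishing on `s`. -/
def vanishOn {F : Type*} (s : Set F) : Submodule ℂ (F → ℂ) where
  carrier := {f | ∀ x ∈ s, f x = 0}
  add_mem' := by intro a b ha hb x hx; simp [ha x hx, hb x hx]
  zero_mem' := by intro x hx; simp
  smul_mem' := by intro t f hf x hx; simp [hf x hx]

/-- Solutions `f` of `(Q·f)|_{F ∖ s} = 0`. -/
def solSet {F : Type*} [Fintype F] (Q : Matrix F F ℂ) (s : Set F) :
    Submodule ℂ (F → ℂ) where
  carrier := {f | ∀ x, x ∉ s → (Q *ᵥ f) x = 0}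
  add_mem' := by
    intro a b ha hb x hx
    simp only [Matrix.mulVec_add, Pi.add_apply, ha x hx, hb x hx, add_zero]
  zero_mem' := by intro x hx; simp
  smul_mem' := by
    intro t f hf x hx
    simp only [Matrix.mulVec_smul, Pi.smul_apply, hf x hx, smul_zero]

/-- Boundary-values map `f ↦ (f|_s, (Q·f)|_s)`. -/
def bval {F : Type*} [Fintype F] (Q : Matrix F F ℂ) (s : Set F) :
    (F → ℂ) →ₗ[ℂ] ({x // x ∈ s} → ℂ) × ({x // x ∈ s} → ℂ) :=
  LinearMap.prod (LinearMap.funLeft ℂ ℂ Subtype.val)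
    ((LinearMap.funLeft ℂ ℂ Subtype.val).comp Q.mulVecLin)

/-- The symplectic reduction `T(L_Q) = {(f|_{∂F}, (Q·f)|_{∂F}) : (Q·f)|_{F∖∂F} = 0}`. -/
def Tred {F : Type*} [Fintype F] (Q : Matrix F F ℂ) (s : Set F) :
    Submodule ℂ (({x // x ∈ s} → ℂ) × ({x // x ∈ s} → ℂ)) :=
  Submodule.map (bval Q s) (solSet Q s)

lemma finrank_map_eq_sub {V W : Type*} [AddCommGroup V] [Module ℂ V] [AddCommGroup W]
    [Module ℂ W] [FiniteDimensional ℂ V] (φ : V →ₗ[ℂ] W) (K : Submodule ℂ V) :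
    Module.finrank ℂ (Submodule.map φ K) =
      Module.finrank ℂ K - Module.finrank ℂ (K ⊓ LinearMap.ker φ : Submodule ℂ V) := by
  have h := LinearMap.finrank_range_add_finrank_ker (φ.comp K.subtype)
  have hr : LinearMap.range (φ.comp K.subtype) = Submodule.map φ K := by
    rw [LinearMap.range_comp, Submodule.range_subtype]
  have hk : LinearMap.ker (φ.comp K.subtype) = Submodule.comap K.subtype (K ⊓ LinearMap.ker φ) := by
    rw [LinearMap.ker_comp, Submodule.comap_inf, Submodule.comap_subtype_self, top_inf_eq]
  have he : Module.finrank ℂ (Submodule.comap K.subtype (K ⊓ LinearMap.ker φ)) =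
      Module.finrank ℂ (K ⊓ LinearMap.ker φ : Submodule ℂ V) :=
    (Submodule.comapSubtypeEquivOfLe inf_le_left).finrank_eq
  rw [hr, hk, he] at h
  omega

section main
variable {F : Type*} [Fintype F] (s : Set F) (Q : Matrix F F ℂ)

lemma mem_bval_snd (f : F → ℂ) : ((bval Q s) f).2 = fun x : {x // x ∈ s} => (Q *ᵥ f) x := rfl
lemma mem_bval_fst (f : F → ℂ) : ((bval Q s) f).1 = fun x : {x // x ∈ s} => f x := rfl

lemma eqA : Tred Q s ⊓ LinearMap.ker
      (LinearMap.snd ℂ ({x // x ∈ s} → ℂ) ({x // x ∈ s} → ℂ))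
    = Submodule.map (bval Q s) (LinearMap.ker Q.mulVecLin) := by
  ext ⟨u, v⟩
  simp only [Submodule.mem_inf, LinearMap.mem_ker, LinearMap.snd_apply, Tred,
    Submodule.mem_map]
  constructor
  · rintro ⟨⟨f, hf, hbf⟩, hv⟩
    refine ⟨f, ?_, hbf⟩
    have h2 : ((bval Q s) f).2 = v := by rw [hbf]
    rw [hv] at h2
    funext x
    by_cases hx : x ∈ s
    · exact congrFun h2 ⟨x, hx⟩
    · exact hf x hx
  · rintro ⟨f, hf, hbf⟩
    have hf0 : Q *ᵥ f = 0 := hf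
    refine ⟨⟨f, fun x hx => by rw [hf0]; rfl, hbf⟩, ?_⟩
    have : ((bval Q s) f).2 = v := by rw [hbf]
    rw [← this]
    funext x; rw [mem_bval_snd, hf0]; rfl

lemma eqB : Tred Q s ⊓ LinearMap.ker
      (LinearMap.fst ℂ ({x // x ∈ s} → ℂ) ({x // x ∈ s} → ℂ))
    = Submodule.map (bval Q s) (solSet Q s ⊓ vanishOn s) := by
  ext ⟨u, v⟩
  simp only [Submodule.mem_inf, LinearMap.mem_ker, LinearMap.fst_apply, Tred,
    Submodule.mem_map]
  constructor
  · rintro ⟨⟨f, hf, hbf⟩, hu⟩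
    refine ⟨f, ⟨hf, fun x hx => ?_⟩, hbf⟩
    have h1 : ((bval Q s) f).1 = u := by rw [hbf]
    rw [hu] at h1
    exact congrFun h1 ⟨x, hx⟩
  · rintro ⟨f, ⟨hf, hv⟩, hbf⟩
    refine ⟨⟨f, hf, hbf⟩, ?_⟩
    have h1 : ((bval Q s) f).1 = u := by rw [hbf]
    rw [← h1]
    funext x; exact hv x x.2

lemma ker_inf_A : LinearMap.ker Q.mulVecLin ⊓ LinearMap.ker (bval Q s)
    = LinearMap.ker Q.mulVecLin ⊓ vanishOn s := by
  ext f
  simp only [Submodule.mem_inf, LinearMap.mem_ker, bval, LinearMap.prod_apply, Function.prod,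
    Prod.mk_eq_zero, vanishOn, Submodule.mem_mk, AddSubmonoid.mem_mk, AddSubsemigroup.mem_mk,
    Set.mem_setOf_eq]
  constructor
  · rintro ⟨h1, h2, h3⟩
    exact ⟨h1, fun x hx => congrFun h2 ⟨x, hx⟩⟩
  · rintro ⟨h1, h2⟩
    refine ⟨h1, funext fun x => h2 x x.2, funext fun x => ?_⟩
    show (Q *ᵥ f) x.val = 0
    rw [show Q *ᵥ f = 0 from h1]; rfl

lemma ker_inf_B : (solSet Q s ⊓ vanishOn s) ⊓ LinearMap.ker (bval Q s)
    = LinearMap.ker Q.mulVecLin ⊓ vanishOn s := by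
  ext f
  simp only [Submodule.mem_inf, LinearMap.mem_ker, bval, LinearMap.prod_apply, Function.prod,
    Prod.mk_eq_zero, vanishOn, solSet, Submodule.mem_mk, AddSubmonoid.mem_mk,
    AddSubsemigroup.mem_mk, Set.mem_setOf_eq]
  constructor
  · rintro ⟨⟨h1, h2⟩, h3, h4⟩
    refine ⟨funext fun x => ?_, h2⟩
    by_cases hx : x ∈ s
    · exact congrFun h4 ⟨x, hx⟩
    · exact h1 x hx
  · rintro ⟨h1, h2⟩
    have h1' : Q *ᵥ f = 0 := h1
    exact ⟨⟨fun x hx => by rw [h1']; rfl, h2⟩, funext fun x => h2 x x.2,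
      funext fun x => by show (Q *ᵥ f) x.val = 0; rw [h1']; rfl⟩

end main

/-- (a) `T(L_Q) ∩ (ℂ^{∂F} ⊕ 0) = {(f|_{∂F}, 0) : Q·f = 0}` with dimension
`dim ker Q − dim ker^{ND} Q`; (b) `T(L_Q) ∩ (0 ⊕ ℂ^{∂F}) = {(0, (Q·f)|_{∂F}) : f|_{∂F} = 0,
(Q·f)|_{F∖∂F} = 0}` with dimension `dim {f : f|_{∂F} = 0, (Q·f)|_{F∖∂F} = 0} − dim ker^{ND} Q`,
where `ker^{ND} Q = {f : Q·f = 0, f|_{∂F} = 0}`. -/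
theorem statement_14 {F : Type*} [Fintype F] [DecidableEq F]
    (s : Set F) (Q : Matrix F F ℂ) (hQsym : Q.IsSymm) :
    Tred Q s ⊓ LinearMap.ker (LinearMap.snd ℂ ({x // x ∈ s} → ℂ) ({x // x ∈ s} → ℂ))
        = Submodule.map (bval Q s) (LinearMap.ker Q.mulVecLin) ∧
      Module.finrank ℂ
          ↥(Tred Q s ⊓ LinearMap.ker (LinearMap.snd ℂ ({x // x ∈ s} → ℂ) ({x // x ∈ s} → ℂ)))
        = Module.finrank ℂ ↥(LinearMap.ker Q.mulVecLin)
            - Module.finrank ℂ ↥(LinearMap.ker Q.mulVecLin ⊓ vanishOn s) ∧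
      Tred Q s ⊓ LinearMap.ker (LinearMap.fst ℂ ({x // x ∈ s} → ℂ) ({x // x ∈ s} → ℂ))
        = Submodule.map (bval Q s) (solSet Q s ⊓ vanishOn s) ∧
      Module.finrank ℂ
          ↥(Tred Q s ⊓ LinearMap.ker (LinearMap.fst ℂ ({x // x ∈ s} → ℂ) ({x // x ∈ s} → ℂ)))
        = Module.finrank ℂ ↥(solSet Q s ⊓ vanishOn s)
            - Module.finrank ℂ ↥(LinearMap.ker Q.mulVecLin ⊓ vanishOn s) := by
  refine ⟨eqA s Q, ?_, eqB s Q, ?_⟩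
  · rw [eqA s Q, finrank_map_eq_sub, ker_inf_A]
  · rw [eqB s Q, finrank_map_eq_sub, ker_inf_B]
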